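/- Let A and H be groups, φ : A →* H an injective homomorphism, n : ℕ, and let G = Monoid.PushoutI (fun _ : Fin n => φ) be the star of isomorphic groups with n rays, with ray-permuting homomorphisms Φ σ : G →* G for σ : Equiv.Perm (Fin n). Assume that for every nontrivial a ∈ A the centralizer of base a in G satisfies Subgroup.centralizer {base a} ≤ base.range. Suppose u, g, h ∈ G admit reduced word data of lengths p, l, m respectively, with u ≠ 1, h ≠ 1, and p + l + m ≥ 1. Then for all q, k : ℕ there exists a finset T of permutations of Fin n with T.card = (n − 2) / 2 (natural-number operations, i.e. ⌊(n−2)/2⌋) such that for all σ, τ ∈ T with σ ≠ τ, the triples (Φ σ u, Φ σ g, Φ σ h) and (Φ τ u, Φ τ g, Φ τ h) are not related by the (q,k)-double-coset relation. -/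

import Mathlib

open Monoid

/-- A reduced word datum of length `l.length` for an element `g` of the star of isomorphic
groups `Monoid.PushoutI (fun _ : Fin n => φ)`. -/
def IsReducedDatum {A H : Type*} [Group A] [Group H] {n : ℕ} (φ : A →* H)
    (g : Monoid.PushoutI (fun _ : Fin n => φ)) (a : A) (l : List (Fin n × H)) : Prop :=
  (∀ p ∈ l, p.2 ∉ Set.range φ) ∧
  l.Chain' (fun p q => p.1 ≠ q.1) ∧
  g = Monoid.PushoutI.base (fun _ : Fin n => φ) a *
      (l.map fun p => Monoid.PushoutI.of (φ := fun _ : Fin n => φ) p.1 p.2).prod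

/-- The `(q,k)`-double-coset equivalence relation on triples of elements of a group. -/
def DCosetRel {G : Type*} [Group G] (q k : ℕ) (x y : G × G × G) : Prop :=
  (x.1 = 1 ∧ y.1 = 1) ∨ (x.2.2 = 1 ∧ y.2.2 = 1) ∨
    (x.1 ≠ 1 ∧ x.2.2 ≠ 1 ∧ ∃ a c : G,
      Subgroup.centralizer {x.1} = Subgroup.zpowers a ∧
      Subgroup.centralizer {y.1} = Subgroup.zpowers a ∧
      Subgroup.centralizer {x.2.2} = Subgroup.zpowers c ∧
      Subgroup.centralizer {y.2.2} = Subgroup.zpowers c ∧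
      ∃ γ ∈ Subgroup.zpowers (a ^ q), ∃ ε ∈ Subgroup.zpowers (c ^ k),
        γ * x.2.1 * ε = y.2.1)

set_option linter.unusedSectionVars false

namespace StarAux

variable {A H : Type*} [Group A] [Group H] {n : ℕ} {φ : A →* H}

/-- Convert a list datum into a `CoprodI.Word`. -/
def toCW (L : List (Fin n × H)) (h1 : ∀ p ∈ L, p.2 ∉ Set.range φ)
    (h2 : L.Chain' fun p q => p.1 ≠ q.1) :
    CoprodI.Word (fun _ : Fin n => H) :=
  ⟨L.map fun p => ⟨p.1, p.2⟩,
   by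
    intro l hl
    simp only [List.mem_map] at hl
    obtain ⟨p, hp, rfl⟩ := hl
    intro hone
    exact h1 p hp ⟨1, by simpa using hone.symm⟩,
   by
    rw [List.isChain_map]
    exact h2⟩

theorem toCW_reduced (L : List (Fin n × H)) (h1 : ∀ p ∈ L, p.2 ∉ Set.range φ)
    (h2 : L.Chain' fun p q => p.1 ≠ q.1) :
    PushoutI.Reduced (fun _ : Fin n => φ) (toCW L h1 h2) := by
  intro g hg
  simp only [toCW, List.mem_map] at hg
  obtain ⟨p, hp, rfl⟩ := hg
  rintro ⟨y, hy⟩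
  exact h1 p hp ⟨y, hy⟩

theorem ofCoprodI_toCW_prod (L : List (Fin n × H)) (h1 : ∀ p ∈ L, p.2 ∉ Set.range φ)
    (h2 : L.Chain' fun p q => p.1 ≠ q.1) :
    PushoutI.ofCoprodI (φ := fun _ : Fin n => φ) (toCW L h1 h2).prod =
      (L.map fun p => PushoutI.of (φ := fun _ : Fin n => φ) p.1 p.2).prod := by
  rw [CoprodI.Word.prod, map_list_prod]
  simp [toCW, List.map_map, Function.comp_def, PushoutI.ofCoprodI_of]

/-- Uniqueness of the index sequence of reduced data. -/
theorem indices_unique (hφ : Function.Injective φ) {x : PushoutI (fun _ : Fin n => φ)}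
    {a b : A} {L M : List (Fin n × H)}
    (hL : IsReducedDatum φ x a L) (hM : IsReducedDatum φ x b M) :
    L.map Prod.fst = M.map Prod.fst := by
  obtain ⟨hL1, hL2, hLx⟩ := hL
  obtain ⟨hM1, hM2, hMx⟩ := hM
  obtain ⟨d⟩ := PushoutI.NormalWord.transversal_nonempty (fun _ : Fin n => φ) (fun _ => hφ)
  obtain ⟨v1, hv1p, hv1m⟩ := (toCW_reduced L hL1 hL2).exists_normalWord_prod_eq d
  obtain ⟨v2, hv2p, hv2m⟩ := (toCW_reduced M hM1 hM2).exists_normalWord_prod_eq d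
  have hprod : PushoutI.NormalWord.prod (a • v1) = PushoutI.NormalWord.prod (b • v2) := by
    rw [PushoutI.NormalWord.prod_base_smul, PushoutI.NormalWord.prod_base_smul,
      hv1p, hv2p, ofCoprodI_toCW_prod, ofCoprodI_toCW_prod, ← hLx, ← hMx]
  have heq := PushoutI.NormalWord.prod_injective hprod
  have hlist : v1.toWord.toList = v2.toWord.toList := by
    have := congrArg (fun w : PushoutI.NormalWord d => w.toWord.toList) heq
    simpa [PushoutI.NormalWord.base_smul_def'] using this
  have h1 : (toCW L hL1 hL2).toList.map Sigma.fst = L.map Prod.fst := by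
    simp [toCW, List.map_map, Function.comp_def]
  have h2 : (toCW M hM1 hM2).toList.map Sigma.fst = M.map Prod.fst := by
    simp [toCW, List.map_map, Function.comp_def]
  rw [← h1, ← hv1m, ← h2, ← hv2m, hlist]

theorem fst_dropLast_concat {L : List (Fin n × H)} (hL : L ≠ []) (z : H) :
    ((L.dropLast ++ [((L.getLast hL).1, z)]).map Prod.fst) = L.map Prod.fst := by
  conv_rhs => rw [← List.dropLast_append_getLast hL]
  simp

theorem base_mul_datum {x : PushoutI (fun _ : Fin n => φ)} {a : A} {L : List (Fin n × H)}
    (hx : IsReducedDatum φ x a L) (c : A) :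
    IsReducedDatum φ (PushoutI.base (fun _ : Fin n => φ) c * x) (c * a) L :=
  ⟨hx.1, hx.2.1, by rw [hx.2.2, map_mul, mul_assoc]⟩

theorem datum_mul_base {x : PushoutI (fun _ : Fin n => φ)} {a : A} {L : List (Fin n × H)}
    (hx : IsReducedDatum φ x a L) (hL : L ≠ []) (c : A) :
    IsReducedDatum φ (x * PushoutI.base (fun _ : Fin n => φ) c) a
      (L.dropLast ++ [((L.getLast hL).1, (L.getLast hL).2 * φ c)]) := by
  obtain ⟨h1, h2, h3⟩ := hx
  refine ⟨?_, ?_, ?_⟩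
  · intro p hp
    rcases List.mem_append.1 hp with hp | hp
    · exact h1 p (List.dropLast_subset L hp)
    · simp only [List.mem_singleton] at hp
      subst hp
      rintro ⟨y, hy⟩
      exact h1 _ (List.getLast_mem hL) ⟨y * c⁻¹, by rw [map_mul, map_inv, hy]; group⟩
  · have := (List.isChain_map (R := (· ≠ ·)) Prod.fst).2 h2
    rw [← fst_dropLast_concat hL ((L.getLast hL).2 * φ c)] at this
    exact (List.isChain_map (R := (· ≠ ·)) Prod.fst).1 this
  · conv_lhs => rw [h3, ← List.dropLast_append_getLast hL]
    rw [← PushoutI.of_apply_eq_base (fun _ : Fin n => φ) (L.getLast hL).1 c]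
    simp [mul_assoc, List.map_append]

theorem datum_append {x : PushoutI (fun _ : Fin n => φ)} {a : A} {L M : List (Fin n × H)}
    (hx : IsReducedDatum φ x a L)
    (hM1 : ∀ p ∈ M, p.2 ∉ Set.range φ)
    (hM2 : M.Chain' fun p q => p.1 ≠ q.1)
    (hj : ∀ pl ∈ L.getLast?, ∀ pm ∈ M.head?, pl.1 ≠ pm.1) :
    IsReducedDatum φ
      (x * (M.map fun p => Monoid.PushoutI.of (φ := fun _ : Fin n => φ) p.1 p.2).prod)
      a (L ++ M) := by
  obtain ⟨h1, h2, h3⟩ := hx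
  refine ⟨?_, ?_, ?_⟩
  · intro p hp
    rcases List.mem_append.1 hp with hp | hp
    · exact h1 p hp
    · exact hM1 p hp
  · exact List.isChain_append.2 ⟨h2, hM2, hj⟩
  · rw [h3, List.map_append, List.prod_append, mul_assoc]

theorem datum_mul {x y : PushoutI (fun _ : Fin n => φ)} {a b : A} {L M : List (Fin n × H)}
    (hx : IsReducedDatum φ x a L) (hy : IsReducedDatum φ y b M)
    (hL : L ≠ []) (hM : M ≠ []) (hj : (L.getLast hL).1 ≠ (M.head hM).1) :
    ∃ L' : List (Fin n × H), L'.map Prod.fst = L.map Prod.fst ++ M.map Prod.fst ∧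
      IsReducedDatum φ (x * y) a L' := by
  set e : Fin n × H := ((L.getLast hL).1, (L.getLast hL).2 * φ b) with he
  have h1 := datum_mul_base hx hL b
  have h2 := datum_append h1 hy.1 hy.2.1 (by
    intro pl hpl pm hpm
    rw [List.getLast?_concat] at hpl
    rw [List.head?_eq_head hM] at hpm
    simp only [Option.mem_some_iff] at hpl hpm
    subst hpl; subst hpm
    exact hj)
  refine ⟨(L.dropLast ++ [e]) ++ M, ?_, ?_⟩
  · rw [List.map_append, fst_dropLast_concat hL]
  · have : x * PushoutI.base (fun _ : Fin n => φ) b *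
        (M.map fun p => Monoid.PushoutI.of (φ := fun _ : Fin n => φ) p.1 p.2).prod = x * y := by
      rw [hy.2.2, mul_assoc]
    rwa [this] at h2

theorem datum_one : IsReducedDatum φ (1 : PushoutI (fun _ : Fin n => φ)) 1 [] :=
  ⟨by simp, List.isChain_nil, by simp⟩

theorem datum_ne_one (hφ : Function.Injective φ) {x : PushoutI (fun _ : Fin n => φ)}
    {a : A} {L : List (Fin n × H)} (hx : IsReducedDatum φ x a L) (hL : L ≠ []) :
    x ≠ 1 := by
  intro hcon
  subst hcon
  have := indices_unique hφ hx datum_one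
  simp only [List.map_nil, List.map_eq_nil_iff] at this
  exact hL this

theorem not_commute (hφ : Function.Injective φ) {x y : PushoutI (fun _ : Fin n => φ)}
    {a b : A} {L M : List (Fin n × H)}
    (hx : IsReducedDatum φ x a L) (hy : IsReducedDatum φ y b M)
    (hL : L ≠ []) (hM : M ≠ [])
    (hhead : (L.head hL).1 ≠ (M.head hM).1)
    (h2 : (L.getLast hL).1 ≠ (M.head hM).1)
    (h3 : (M.getLast hM).1 ≠ (L.head hL).1) :
    x * y ≠ y * x := by
  intro hcomm
  obtain ⟨L', hL'f, hL'⟩ := datum_mul hx hy hL hM h2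
  obtain ⟨M', hM'f, hM'⟩ := datum_mul hy hx hM hL h3
  rw [hcomm] at hL'
  have hind := indices_unique hφ hL' hM'
  rw [hL'f, hM'f] at hind
  obtain ⟨pl, Lt, rfl⟩ := List.exists_cons_of_ne_nil hL
  obtain ⟨pm, Mt, rfl⟩ := List.exists_cons_of_ne_nil hM
  simp only [List.map_cons, List.cons_append, List.cons.injEq] at hind
  exact hhead (by simpa using hind.1)

variable {Φ : Equiv.Perm (Fin n) →
      (Monoid.PushoutI (fun _ : Fin n => φ) →* Monoid.PushoutI (fun _ : Fin n => φ))}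

theorem perm_of (hΦ : ∀ (σ : Equiv.Perm (Fin n)) (i : Fin n),
      (Φ σ).comp (Monoid.PushoutI.of (φ := fun _ : Fin n => φ) i) =
        Monoid.PushoutI.of (φ := fun _ : Fin n => φ) (σ i))
    (σ : Equiv.Perm (Fin n)) (i : Fin n) (x : H) :
    Φ σ (PushoutI.of (φ := fun _ : Fin n => φ) i x) =
      PushoutI.of (φ := fun _ : Fin n => φ) (σ i) x := by
  have := congrFun (congrArg DFunLike.coe (hΦ σ i)) x
  simpa using this

theorem perm_base (hΦ : ∀ (σ : Equiv.Perm (Fin n)) (i : Fin n),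
      (Φ σ).comp (Monoid.PushoutI.of (φ := fun _ : Fin n => φ) i) =
        Monoid.PushoutI.of (φ := fun _ : Fin n => φ) (σ i))
    (i0 : Fin n) (σ : Equiv.Perm (Fin n)) (a : A) :
    Φ σ (PushoutI.base (fun _ : Fin n => φ) a) = PushoutI.base (fun _ : Fin n => φ) a := by
  conv_lhs => rw [← PushoutI.of_apply_eq_base (fun _ : Fin n => φ) i0 a]
  rw [perm_of hΦ, PushoutI.of_apply_eq_base]

theorem datum_perm (hΦ : ∀ (σ : Equiv.Perm (Fin n)) (i : Fin n),
      (Φ σ).comp (Monoid.PushoutI.of (φ := fun _ : Fin n => φ) i) =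
        Monoid.PushoutI.of (φ := fun _ : Fin n => φ) (σ i))
    (i0 : Fin n) (σ : Equiv.Perm (Fin n))
    {x : PushoutI (fun _ : Fin n => φ)} {a : A} {L : List (Fin n × H)}
    (hx : IsReducedDatum φ x a L) :
    IsReducedDatum φ (Φ σ x) a (L.map fun p => (σ p.1, p.2)) := by
  obtain ⟨h1, h2, h3⟩ := hx
  refine ⟨?_, ?_, ?_⟩
  · intro p hp
    simp only [List.mem_map] at hp
    obtain ⟨q, hq, rfl⟩ := hp
    exact h1 q hq
  · show List.IsChain _ _
    rw [List.isChain_map]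
    exact h2.imp (fun {p q} hpq => by
      simp only [ne_eq]
      exact fun hcon => hpq (σ.injective hcon))
  · rw [h3, map_mul, perm_base hΦ i0, map_list_prod, List.map_map, List.map_map]
    refine congrArg _ (congrArg List.prod (List.map_congr_left (fun p _ => ?_)))
    show Φ σ (PushoutI.of (φ := fun _ : Fin n => φ) p.1 p.2) = _
    exact perm_of hΦ σ p.1 p.2

/-- permutations separating a pair of points -/
theorem exists_T (n : ℕ) (f la : Fin n) :
    ∃ T : Finset (Equiv.Perm (Fin n)), T.card = (n - 2) / 2 ∧
      ∀ σ ∈ T, ∀ τ ∈ T, σ ≠ τ → σ f ≠ τ f ∧ σ la ≠ τ f ∧ τ la ≠ σ f := by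
  classical
  have hdiv : (n - 2) / 2 * 2 ≤ n - 2 := Nat.div_mul_le_self _ _
  have hbound : ∀ t : Fin ((n - 2) / 2), 2 * t.1 + 1 < n := by
    intro t
    have ht := t.2
    omega
  set c : Fin ((n - 2) / 2) → Fin n := fun t => ⟨2 * t.1, by have := hbound t; omega⟩ with hc
  set d : Fin ((n - 2) / 2) → Fin n := fun t => ⟨2 * t.1 + 1, hbound t⟩ with hd
  have hcd : ∀ t, c t ≠ d t := by
    intro t
    simp only [hc, hd, ne_eq, Fin.mk.injEq]
    omega
  set π : Fin ((n - 2) / 2) → Equiv.Perm (Fin n) := fun t =>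
    if hfla : f = la then Equiv.swap f (c t)
    else (Equiv.swap ((Equiv.swap f (c t)) la) (d t)) * (Equiv.swap f (c t)) with hπ
  have hπf : ∀ t, π t f = c t := by
    intro t
    by_cases hfla : f = la
    · simp [hπ, hfla, Equiv.swap_apply_left]
    · have h1 : (Equiv.swap f (c t)) la ≠ c t := by
        intro hcon
        exact hfla (((Equiv.swap f (c t)).injective
          (by rw [hcon, Equiv.swap_apply_left])).symm)
      simp only [hπ, hfla, dite_false, Equiv.Perm.mul_apply, Equiv.swap_apply_left]
      exact Equiv.swap_apply_of_ne_of_ne (Ne.symm h1) (hcd t)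
  have hπla : ∀ t, π t la = c t ∨ π t la = d t := by
    intro t
    by_cases hfla : f = la
    · left; rw [← hfla]; exact hπf t ▸ (by rw [hfla])
    · right
      simp only [hπ, hfla, dite_false, Equiv.Perm.mul_apply, Equiv.swap_apply_left]
  have hinj : Function.Injective π := by
    intro t t' htt
    have hcc : c t = c t' := by rw [← hπf t, ← hπf t', htt]
    have := congrArg Fin.val hcc
    simp only [hc] at this
    exact Fin.ext (by omega)
  refine ⟨Finset.image π Finset.univ, ?_, ?_⟩
  · rw [Finset.card_image_of_injective _ hinj, Finset.card_univ, Fintype.card_fin]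
  · intro σ hσ τ hτ hne
    simp only [Finset.mem_image, Finset.mem_univ, true_and] at hσ hτ
    obtain ⟨t, rfl⟩ := hσ
    obtain ⟨t', rfl⟩ := hτ
    have htt : t ≠ t' := fun hcon => hne (by rw [hcon])
    have hvals : (2 : ℕ) * t.1 ≠ 2 * t'.1 := by
      intro hcon
      exact htt (Fin.ext (by omega))
    refine ⟨?_, ?_, ?_⟩
    · rw [hπf t, hπf t']
      simp only [hc, ne_eq, Fin.mk.injEq]
      omega
    · rw [hπf t']
      rcases hπla t with hl | hl <;> rw [hl] <;> simp only [hc, hd, ne_eq, Fin.mk.injEq] <;> omega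
    · rw [hπf t]
      rcases hπla t' with hl | hl <;> rw [hl] <;> simp only [hc, hd, ne_eq, Fin.mk.injEq] <;> omega

end StarAux

namespace StarAux

variable {A H : Type*} [Group A] [Group H] {n : ℕ} {φ : A →* H}

theorem map_perm_ne_nil (σ : Equiv.Perm (Fin n)) {L : List (Fin n × H)} (hL : L ≠ []) :
    (L.map fun p => (σ p.1, p.2)) ≠ [] := by simpa using hL

theorem head_fst_map (σ : Equiv.Perm (Fin n)) {L : List (Fin n × H)} (hL : L ≠ [])
    (h' : (L.map fun p => (σ p.1, p.2)) ≠ []) :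
    ((L.map fun p => (σ p.1, p.2)).head h').1 = σ (L.head hL).1 := by
  rw [List.head_map]

theorem getLast_fst_map (σ : Equiv.Perm (Fin n)) {L : List (Fin n × H)} (hL : L ≠ [])
    (h' : (L.map fun p => (σ p.1, p.2)) ≠ []) :
    ((L.map fun p => (σ p.1, p.2)).getLast h').1 = σ (L.getLast hL).1 := by
  rw [List.getLast_map]

theorem self_mem_centralizer {G : Type*} [Group G] (x : G) :
    x ∈ Subgroup.centralizer {x} :=
  Subgroup.mem_centralizer_iff.2 (by rintro y hy; rw [Set.mem_singleton_iff] at hy; rw [hy])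

end StarAux

open StarAux

/-- Lemma 3.4 (OrbitsDCosets): in a star of isomorphic groups with `n` rays, in which
centralizers of nontrivial elements of the amalgamated subgroup lie in the amalgamated
subgroup, the orbit of a triple `(u, g, h)` (with `u ≠ 1`, `h ≠ 1`, given by reduced words
whose lengths sum to at least 1) under the ray-permuting automorphisms meets at least
`⌊(n-2)/2⌋` many `(q,k)`-double-cosets, for all `q, k`. -/
theorem orbits_double_cosets {A H : Type*} [Group A] [Group H] (φ : A →* H)
    (hφ : Function.Injective φ) (n : ℕ)
    (Φ : Equiv.Perm (Fin n) →
      (Monoid.PushoutI (fun _ : Fin n => φ) →* Monoid.PushoutI (fun _ : Fin n => φ)))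
    (hΦ : ∀ (σ : Equiv.Perm (Fin n)) (i : Fin n),
      (Φ σ).comp (Monoid.PushoutI.of (φ := fun _ : Fin n => φ) i) =
        Monoid.PushoutI.of (φ := fun _ : Fin n => φ) (σ i))
    (hcent : ∀ a : A, a ≠ 1 →
      Subgroup.centralizer {Monoid.PushoutI.base (fun _ : Fin n => φ) a} ≤
        (Monoid.PushoutI.base (fun _ : Fin n => φ)).range)
    (u g h : Monoid.PushoutI (fun _ : Fin n => φ))
    (au ag ah : A) (lu lg lh : List (Fin n × H)) (p l m : ℕ)
    (hlu : lu.length = p) (hlg : lg.length = l) (hlh : lh.length = m)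
    (hredu : IsReducedDatum φ u au lu)
    (hredg : IsReducedDatum φ g ag lg) (hredh : IsReducedDatum φ h ah lh)
    (hu : u ≠ 1) (hh : h ≠ 1) (hplm : 1 ≤ p + l + m) :
    ∀ q k : ℕ, ∃ T : Finset (Equiv.Perm (Fin n)), T.card = (n - 2) / 2 ∧
      ∀ σ ∈ T, ∀ τ ∈ T, σ ≠ τ →
        ¬ DCosetRel q k (Φ σ u, Φ σ g, Φ σ h) (Φ τ u, Φ τ g, Φ τ h) := by
  classical
  intro q k
  by_cases hlu0 : lu = []
  · -- u is a base element, fixed by all Φ σ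
    have hu_base : u = Monoid.PushoutI.base (fun _ : Fin n => φ) au := by
      rw [hredu.2.2, hlu0]; simp
    have hau : au ≠ 1 := by
      rintro rfl
      exact hu (by rw [hu_base, map_one])
    by_cases hlh0 : lh = []
    · -- mode g : both u and h are base elements
      have hh_base : h = Monoid.PushoutI.base (fun _ : Fin n => φ) ah := by
        rw [hredh.2.2, hlh0]; simp
      have hah : ah ≠ 1 := by
        rintro rfl
        exact hh (by rw [hh_base, map_one])
      have hlg0 : lg ≠ [] := by
        intro hcon
        rw [hlu0] at hlu; rw [hlh0] at hlh; rw [hcon] at hlg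
        simp only [List.length_nil] at hlu hlg hlh
        omega
      obtain ⟨p0, lgt, rfl⟩ := List.exists_cons_of_ne_nil hlg0
      set i0 : Fin n := p0.1 with hi0
      obtain ⟨T, hTc, hTsep⟩ := exists_T n i0 i0
      refine ⟨T, hTc, ?_⟩
      intro σ hσ τ hτ hστ hrel
      obtain ⟨hsep1, -, -⟩ := hTsep σ hσ τ hτ hστ
      have hfixu : ∀ ρ, Φ ρ u = u := fun ρ => by
        rw [hu_base]; exact perm_base hΦ i0 ρ au
      have hfixh : ∀ ρ, Φ ρ h = h := fun ρ => by
        rw [hh_base]; exact perm_base hΦ i0 ρ ah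
      rcases hrel with ⟨h1, -⟩ | ⟨h1, -⟩ |
        ⟨-, -, a, c, hca1, hca2, hcc1, hcc2, γ, hγ, ε, hε, heq⟩
      · exact hu (by rw [← hfixu σ]; exact h1)
      · exact hh (by rw [← hfixh σ]; exact h1)
      · have hca1' : Subgroup.centralizer {u} = Subgroup.zpowers a := by
          rw [← hfixu σ]; exact hca1
        have hcc1' : Subgroup.centralizer {h} = Subgroup.zpowers c := by
          rw [← hfixh σ]; exact hcc1
        obtain ⟨α, hα⟩ := hcent au hau (by
          rw [← hu_base, hca1']; exact Subgroup.mem_zpowers a)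
        obtain ⟨χ, hχ⟩ := hcent ah hah (by
          rw [← hh_base, hcc1']; exact Subgroup.mem_zpowers c)
        obtain ⟨j, hj⟩ := Subgroup.mem_zpowers_iff.1 hγ
        obtain ⟨j', hj'⟩ := Subgroup.mem_zpowers_iff.1 hε
        have hγb : γ = Monoid.PushoutI.base (fun _ : Fin n => φ) ((α ^ q) ^ j) := by
          rw [map_zpow, map_pow, hα, hj]
        have hεb : ε = Monoid.PushoutI.base (fun _ : Fin n => φ) ((χ ^ k) ^ j') := by
          rw [map_zpow, map_pow, hχ, hj']
        have heq' : γ * Φ σ g * ε = Φ τ g := heq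
        have hDσ := datum_perm hΦ i0 σ hredg
        have hDτ := datum_perm hΦ i0 τ hredg
        have hLσne := map_perm_ne_nil σ hlg0
        have hD2 := base_mul_datum hDσ ((α ^ q) ^ j)
        have hD3 := datum_mul_base hD2 hLσne ((χ ^ k) ^ j')
        have hD4 : IsReducedDatum φ (Φ τ g) ((α ^ q) ^ j * ag)
            ((((p0 :: lgt).map fun pp => (σ pp.1, pp.2)).dropLast ++
              [(((((p0 :: lgt).map fun pp => (σ pp.1, pp.2))).getLast hLσne).1,
                ((((p0 :: lgt).map fun pp => (σ pp.1, pp.2))).getLast hLσne).2 *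
                  φ ((χ ^ k) ^ j'))])) := by
          rw [← heq', hγb, hεb]; exact hD3
        have hind := indices_unique hφ hD4 hDτ
        rw [fst_dropLast_concat hLσne] at hind
        simp only [List.map_cons, List.map_map, List.cons.injEq] at hind
        exact hsep1 (by simpa using hind.1)
    · -- mode h : u base, h has a nonempty word
      set f : Fin n := (lh.head hlh0).1 with hf
      set la : Fin n := (lh.getLast hlh0).1 with hla
      obtain ⟨T, hTc, hTsep⟩ := exists_T n f la
      refine ⟨T, hTc, ?_⟩
      intro σ hσ τ hτ hστ hrel
      obtain ⟨hs1, hs2, hs3⟩ := hTsep σ hσ τ hτ hστ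
      have hfixu : ∀ ρ, Φ ρ u = u := fun ρ => by
        rw [hu_base]; exact perm_base hΦ f ρ au
      have hDhσ := datum_perm hΦ f σ hredh
      have hDhτ := datum_perm hΦ f τ hredh
      have hLσne := map_perm_ne_nil σ hlh0
      have hLτne := map_perm_ne_nil τ hlh0
      rcases hrel with ⟨h1, -⟩ | ⟨h1, -⟩ |
        ⟨-, -, a, c, hca1, hca2, hcc1, hcc2, γ, hγ, ε, hε, heq⟩
      · exact hu (by rw [← hfixu σ]; exact h1)
      · exact datum_ne_one hφ hDhσ hLσne h1
      · have hcc1' : Subgroup.centralizer {Φ σ h} = Subgroup.zpowers c := hcc1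
        have hcc2' : Subgroup.centralizer {Φ τ h} = Subgroup.zpowers c := hcc2
        have hmem : Φ τ h ∈ Subgroup.centralizer {Φ σ h} := by
          rw [hcc1', ← hcc2']; exact self_mem_centralizer _
        have hcomm : Φ σ h * Φ τ h = Φ τ h * Φ σ h :=
          Subgroup.mem_centralizer_iff.1 hmem (Φ σ h) rfl
        refine not_commute hφ hDhσ hDhτ hLσne hLτne ?_ ?_ ?_ hcomm
        · rw [head_fst_map σ hlh0, head_fst_map τ hlh0]; exact hs1
        · rw [getLast_fst_map σ hlh0, head_fst_map τ hlh0]; exact hs2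
        · rw [getLast_fst_map τ hlh0, head_fst_map σ hlh0]; exact hs3
  · -- mode u : u has a nonempty word
    set f : Fin n := (lu.head hlu0).1 with hf
    set la : Fin n := (lu.getLast hlu0).1 with hla
    obtain ⟨T, hTc, hTsep⟩ := exists_T n f la
    refine ⟨T, hTc, ?_⟩
    intro σ hσ τ hτ hστ hrel
    obtain ⟨hs1, hs2, hs3⟩ := hTsep σ hσ τ hτ hστ
    have hDuσ := datum_perm hΦ f σ hredu
    have hDuτ := datum_perm hΦ f τ hredu
    have hLσne := map_perm_ne_nil σ hlu0
    have hLτne := map_perm_ne_nil τ hlu0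
    rcases hrel with ⟨h1, -⟩ | ⟨h1, -⟩ |
      ⟨-, -, a, c, hca1, hca2, hcc1, hcc2, γ, hγ, ε, hε, heq⟩
    · exact datum_ne_one hφ hDuσ hLσne h1
    · by_cases hlh0 : lh = []
      · have hh_base : h = Monoid.PushoutI.base (fun _ : Fin n => φ) ah := by
          rw [hredh.2.2, hlh0]; simp
        have hfixh : Φ σ h = h := by rw [hh_base]; exact perm_base hΦ f σ ah
        exact hh (by rw [← hfixh]; exact h1)
      · exact datum_ne_one hφ (datum_perm hΦ f σ hredh) (map_perm_ne_nil σ hlh0) h1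
    · have hca1' : Subgroup.centralizer {Φ σ u} = Subgroup.zpowers a := hca1
      have hca2' : Subgroup.centralizer {Φ τ u} = Subgroup.zpowers a := hca2
      have hmem : Φ τ u ∈ Subgroup.centralizer {Φ σ u} := by
        rw [hca1', ← hca2']; exact self_mem_centralizer _
      have hcomm : Φ σ u * Φ τ u = Φ τ u * Φ σ u :=
        Subgroup.mem_centralizer_iff.1 hmem (Φ σ u) rfl
      refine not_commute hφ hDuσ hDuτ hLσne hLτne ?_ ?_ ?_ hcomm
      · rw [head_fst_map σ hlu0, head_fst_map τ hlu0]; exact hs1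
      · rw [getLast_fst_map σ hlu0, head_fst_map τ hlu0]; exact hs2
      · rw [getLast_fst_map τ hlu0, head_fst_map σ hlu0]; exact hs3
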